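/- Let T ∈ ℝ, let a, b, σ be positive real constants, let γ ≥ 0 and ψ ≥ 0, and set k := k(γ) where k(x) := √(a² + 2(1+b·x)·σ²). Then for every t ≤ T the denominator (ψ + (a+k)/σ²) + ((k−a)/σ² − ψ)·exp(−k(T−t)) is strictly positive, the function t ↦ Φ(t,T;ψ,γ) is differentiable on (−∞,T], Φ(T,T;ψ,γ) = ψ, and d/dt Φ(t,T;ψ,γ) = (σ²/2)·Φ(t,T;ψ,γ)² + a·Φ(t,T;ψ,γ) − (1 + b·γ) for all t ≤ T. -/

import Mathlib

/-- k(x) := √(a² + 2(1+b·x)·σ²). -/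
noncomputable def kfun (a b σ x : ℝ) : ℝ := Real.sqrt (a ^ 2 + 2 * (1 + b * x) * σ ^ 2)

/-- The explicit solution Φ(t,T;ψ,γ) of the Riccati equation with constant coefficient γ:
Φ(t,T;ψ,γ) = ( ((k−a)/σ²)(ψ+(a+k)/σ²) + ((a+k)/σ²)(ψ+(a−k)/σ²)e^{−k(T−t)} )
           / ( (ψ+(a+k)/σ²) + ((k−a)/σ²−ψ)e^{−k(T−t)} ), with k = k(γ). -/
noncomputable def Phi (a b σ ψ γ T t : ℝ) : ℝ :=
  ((kfun a b σ γ - a) / σ ^ 2 * (ψ + (a + kfun a b σ γ) / σ ^ 2) +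
      (a + kfun a b σ γ) / σ ^ 2 * (ψ + (a - kfun a b σ γ) / σ ^ 2) *
        Real.exp (-(kfun a b σ γ) * (T - t))) /
    ((ψ + (a + kfun a b σ γ) / σ ^ 2) +
      ((kfun a b σ γ - a) / σ ^ 2 - ψ) * Real.exp (-(kfun a b σ γ) * (T - t)))

lemma quot_lemma (N D N' D' s a g : ℝ) (hD : D ≠ 0)
    (hkey : N' * D - N * D' = s / 2 * N ^ 2 + a * (N * D) - g * D ^ 2) :
    (N' * D - N * D') / D ^ 2 = s / 2 * (N / D) ^ 2 + a * (N / D) - g := by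
  rw [hkey]
  field_simp

set_option maxHeartbeats 1000000 in
lemma key_identity (a K σ ψ E : ℝ) (hσ : σ ≠ 0) :
    ((a + K) / σ ^ 2 * (ψ + (a - K) / σ ^ 2) * (E * K)) *
        (ψ + (a + K) / σ ^ 2 + ((K - a) / σ ^ 2 - ψ) * E)
      - ((K - a) / σ ^ 2 * (ψ + (a + K) / σ ^ 2)
          + (a + K) / σ ^ 2 * (ψ + (a - K) / σ ^ 2) * E) *
        ((((K - a) / σ ^ 2 - ψ)) * (E * K))
    = σ ^ 2 / 2 *
        ((K - a) / σ ^ 2 * (ψ + (a + K) / σ ^ 2)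
          + (a + K) / σ ^ 2 * (ψ + (a - K) / σ ^ 2) * E) ^ 2
      + a * (((K - a) / σ ^ 2 * (ψ + (a + K) / σ ^ 2)
          + (a + K) / σ ^ 2 * (ψ + (a - K) / σ ^ 2) * E) *
        (ψ + (a + K) / σ ^ 2 + ((K - a) / σ ^ 2 - ψ) * E))
      - (K ^ 2 - a ^ 2) / (2 * σ ^ 2) *
        (ψ + (a + K) / σ ^ 2 + ((K - a) / σ ^ 2 - ψ) * E) ^ 2 := by
  field_simp
  ring

/-- for a, b, σ > 0, γ ≥ 0, ψ ≥ 0, the denominator in Φ is strictly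
positive for all t ≤ T, Φ(T,T;ψ,γ) = ψ, and t ↦ Φ(t,T;ψ,γ) is differentiable on
(−∞,T] with derivative (σ²/2)·Φ² + a·Φ − (1 + b·γ). -/
theorem Phi_solves_riccati
    (T a b σ γ ψ : ℝ) (ha : 0 < a) (hb : 0 < b) (hσ : 0 < σ)
    (hγ : 0 ≤ γ) (hψ : 0 ≤ ψ) :
    (∀ t ≤ T,
      0 < (ψ + (a + kfun a b σ γ) / σ ^ 2) +
        ((kfun a b σ γ - a) / σ ^ 2 - ψ) * Real.exp (-(kfun a b σ γ) * (T - t))) ∧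
    Phi a b σ ψ γ T T = ψ ∧
    (∀ t ≤ T, HasDerivWithinAt (fun s => Phi a b σ ψ γ T s)
      (σ ^ 2 / 2 * (Phi a b σ ψ γ T t) ^ 2 + a * Phi a b σ ψ γ T t - (1 + b * γ))
      (Set.Iic T) t) := by
  have hσ2 : (0:ℝ) < σ ^ 2 := by positivity
  set K := kfun a b σ γ with hK
  have hk2 : K ^ 2 = a ^ 2 + 2 * (1 + b * γ) * σ ^ 2 := by
    rw [hK, kfun, Real.sq_sqrt]
    have hbγ : (0:ℝ) ≤ b * γ := mul_nonneg hb.le hγ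
    nlinarith [mul_pos hσ2 hσ2]
  have hbγ : (0:ℝ) ≤ b * γ := mul_nonneg hb.le hγ
  have hK0 : 0 ≤ K := Real.sqrt_nonneg _
  have hak : a < K := by
    nlinarith [mul_pos hσ2 (show (0:ℝ) < 1 + b * γ by linarith)]
  have hKpos : 0 < K := ha.trans hak
  have hD : ∀ t ≤ T,
      0 < (ψ + (a + K) / σ ^ 2) + ((K - a) / σ ^ 2 - ψ) * Real.exp (-K * (T - t)) := by
    intro t ht
    have hE1 : Real.exp (-K * (T - t)) ≤ 1 := by
      rw [show (1:ℝ) = Real.exp 0 by simp]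
      exact Real.exp_le_exp.mpr (by nlinarith)
    have hE0 : 0 < Real.exp (-K * (T - t)) := Real.exp_pos _
    have h1 : 0 < (a + K) / σ ^ 2 := by positivity
    have h2 : 0 ≤ (K - a) / σ ^ 2 := div_nonneg (by linarith) hσ2.le
    nlinarith [mul_nonneg hψ (sub_nonneg.mpr hE1), mul_nonneg h2 hE0.le]
  refine ⟨hD, ?_, ?_⟩
  · have hD0 : (ψ + (a + K) / σ ^ 2) + ((K - a) / σ ^ 2 - ψ) * Real.exp (-K * (T - T)) ≠ 0 :=
      (hD T le_rfl).ne'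
    have h1 : Real.exp (-K * (T - T)) = 1 := by simp
    rw [Phi, ← hK, div_eq_iff hD0, h1]
    field_simp
    ring
  · intro t ht
    have hDt : 0 < (ψ + (a + K) / σ ^ 2) + ((K - a) / σ ^ 2 - ψ) * Real.exp (-K * (T - t)) :=
      hD t ht
    have hlin : HasDerivAt (fun s : ℝ => -K * (T - s)) K t := by
      have h := (((hasDerivAt_id t).const_sub T).const_mul (-K))
      simpa using h
    have hexp : HasDerivAt (fun s => Real.exp (-K * (T - s)))
        (Real.exp (-K * (T - t)) * K) t := hlin.exp
    have hN : HasDerivAt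
        (fun s => (K - a) / σ ^ 2 * (ψ + (a + K) / σ ^ 2) +
          (a + K) / σ ^ 2 * (ψ + (a - K) / σ ^ 2) * Real.exp (-K * (T - s)))
        ((a + K) / σ ^ 2 * (ψ + (a - K) / σ ^ 2) * (Real.exp (-K * (T - t)) * K)) t :=
      (hexp.const_mul _).const_add _
    have hDd : HasDerivAt
        (fun s => (ψ + (a + K) / σ ^ 2) +
          ((K - a) / σ ^ 2 - ψ) * Real.exp (-K * (T - s)))
        (((K - a) / σ ^ 2 - ψ) * (Real.exp (-K * (T - t)) * K)) t :=
      (hexp.const_mul _).const_add _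
    have hdiv := hN.div hDd hDt.ne'
    have hfun : (fun s => Phi a b σ ψ γ T s)
        = fun s => ((K - a) / σ ^ 2 * (ψ + (a + K) / σ ^ 2) +
            (a + K) / σ ^ 2 * (ψ + (a - K) / σ ^ 2) * Real.exp (-K * (T - s))) /
          ((ψ + (a + K) / σ ^ 2) + ((K - a) / σ ^ 2 - ψ) * Real.exp (-K * (T - s))) := by
      funext s
      rw [Phi, ← hK]
    have hPt : Phi a b σ ψ γ T t
        = ((K - a) / σ ^ 2 * (ψ + (a + K) / σ ^ 2) +
            (a + K) / σ ^ 2 * (ψ + (a - K) / σ ^ 2) * Real.exp (-K * (T - t))) /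
          ((ψ + (a + K) / σ ^ 2) + ((K - a) / σ ^ 2 - ψ) * Real.exp (-K * (T - t))) := by
      rw [Phi, ← hK]
    have hg2 : (1:ℝ) + b * γ = (K ^ 2 - a ^ 2) / (2 * σ ^ 2) := by
      field_simp
      linarith
    rw [hfun, hPt, hg2]
    have hval := quot_lemma _ _ _ _ (σ ^ 2) a ((K ^ 2 - a ^ 2) / (2 * σ ^ 2)) hDt.ne'
      (key_identity a K σ ψ (Real.exp (-K * (T - t))) hσ.ne')
    rw [← hval]
    exact hdiv.hasDerivWithinAt
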